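/- arXiv:2206.05829 — 4 statements merged into one kernel-verified Lean document; each statement's English description precedes it below -/
import Mathlib

section
/- In any graphoid, if U ∈ t_j(S) (i.e., U ⊆ S and j ⫫ (S \ U) | U), then the relative Markov boundary of j with respect to U equals the relative Markov boundary of j with respect to S: m(j;U) = m(j;S). -/
/-- An abstract graphoid over a ground type `V`: a ternary relation on subsets
satisfying triviality, symmetry, decomposition, weak union, contraction, intersection. -/
structure Graphoid (V : Type*) where
  ind : Set V → Set V → Set V → Prop
  triv : ∀ A C, ind A ∅ C
  symm : ∀ A B C, ind A B C → ind B A C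
  decomp : ∀ A B D C, ind A (B ∪ D) C → ind A B C ∧ ind A D C
  weakUnion : ∀ A B D C, ind A (B ∪ D) C → ind A B (C ∪ D)
  contr : ∀ A B D C, ind A B C → ind A D (B ∪ C) → ind A (B ∪ D) C
  inter : ∀ A B C D, ind A B (C ∪ D) → ind A C (B ∪ D) → ind A (B ∪ C) D

/-- The collection of relative Markov blankets of `j` within `S`. -/
def Graphoid.tset {V : Type*} (I : Graphoid V) (j : V) (S : Set V) : Set (Set V) :=
  {U | U ⊆ S ∧ I.ind {j} (S \ U) U}

/-- The relative Markov boundary of `j` with respect to `S`. -/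
def Graphoid.mb {V : Type*} (I : Graphoid V) (j : V) (S : Set V) : Set V :=
  ⋂₀ I.tset j S

/-- If `U ∈ t_j(S)` then `m(j;U) = m(j;S)`. -/
theorem mb_of_mem_tset {V : Type*} (I : Graphoid V) (j : V) (S U : Set V)
    (hS : S ⊆ {j}ᶜ) (hU : U ∈ I.tset j S) :
    I.mb j U = I.mb j S := by
  obtain ⟨hUS, hind⟩ := hU
  have mono : ∀ B B' C : Set V, I.ind {j} B C → B' ⊆ B → I.ind {j} B' C := by
    intro B B' C h hB
    have hBB : B = B' ∪ (B \ B') := (Set.union_diff_cancel hB).symm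
    exact (I.decomp {j} B' (B \ B') C (hBB ▸ h)).1
  have h1 : I.tset j U ⊆ I.tset j S := by
    rintro W ⟨hWU, hW⟩
    refine ⟨hWU.trans hUS, ?_⟩
    have hc : I.ind {j} ((U \ W) ∪ (S \ U)) W := by
      refine I.contr {j} (U \ W) (S \ U) W hW ?_
      have hu : (U \ W) ∪ W = U := Set.diff_union_of_subset hWU
      rw [hu]; exact hind
    have heq : (U \ W) ∪ (S \ U) = S \ W := by
      ext x
      simp only [Set.mem_union, Set.mem_diff]
      constructor
      · rintro (⟨h1, h2⟩ | ⟨h1, h2⟩)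
        · exact ⟨hUS h1, h2⟩
        · exact ⟨h1, fun hx => h2 (hWU hx)⟩
      · rintro ⟨h1, h2⟩
        by_cases hx : x ∈ U
        · exact Or.inl ⟨hx, h2⟩
        · exact Or.inr ⟨h1, hx⟩
    rwa [heq] at hc
  have h2 : ∀ W ∈ I.tset j S, W ∩ U ∈ I.tset j U := by
    rintro W ⟨hWS, hW⟩
    refine ⟨Set.inter_subset_right, ?_⟩
    have e1 : (U \ W) ∪ (W ∩ U) = U := by
      ext x; simp only [Set.mem_union, Set.mem_diff, Set.mem_inter_iff]; tauto
    have e2 : (W \ U) ∪ (W ∩ U) = W := by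
      ext x; simp only [Set.mem_union, Set.mem_diff, Set.mem_inter_iff]; tauto
    have hb : I.ind {j} (W \ U) ((U \ W) ∪ (W ∩ U)) := by
      rw [e1]; exact mono _ _ _ hind (fun x hx => ⟨hWS hx.1, hx.2⟩)
    have hc : I.ind {j} (U \ W) ((W \ U) ∪ (W ∩ U)) := by
      rw [e2]; exact mono _ _ _ hW (fun x hx => ⟨hUS hx.1, hx.2⟩)
    have hi := I.inter {j} (W \ U) (U \ W) (W ∩ U) hb hc
    have := (I.decomp {j} (W \ U) (U \ W) (W ∩ U) hi).2
    have e3 : U \ (W ∩ U) = U \ W := by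
      ext x; simp only [Set.mem_diff, Set.mem_inter_iff]; tauto
    rwa [e3]
  apply Set.Subset.antisymm
  · intro x hx W hW
    have hmem : W ∩ U ∈ I.tset j U := h2 W hW
    exact (Set.sInter_subset_of_mem hmem hx).1
  · exact Set.sInter_subset_sInter h1
end

section
/- In a compositional graphoid, the infimum (intersection of all elements) of the neighbourhood lattice T_j(S) equals the relative Markov boundary m(j;S). -/
namespace Graphoid
variable {V : Type*} (I : Graphoid V)

lemma decomp_subset {A B B' C : Set V} (h : I.ind A B C) (hB : B' ⊆ B) :
    I.ind A B' C := by
  have : B = B' ∪ (B \ B') := by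
    ext x; simp only [Set.mem_union, Set.mem_diff]; tauto
  exact (I.decomp A B' (B \ B') C (this ▸ h)).1

lemma mem_tset_self (j : V) (S : Set V) : S ∈ I.tset j S := by
  refine ⟨le_refl _, ?_⟩
  have : S \ S = (∅ : Set V) := by simp
  rw [this]; exact I.triv _ _

lemma mb_subset (j : V) (S : Set V) : I.mb j S ⊆ S :=
  Set.sInter_subset_of_mem (I.mem_tset_self j S)

/-- If `W` is a blanket of `S` and `Z ⊆ W` is a blanket of `S`, then `Z` is a blanket of `W`. -/
lemma tset_down {j : V} {S W Z : Set V} (hW : W ∈ I.tset j S) (hZ : Z ∈ I.tset j S)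
    (hZW : Z ⊆ W) : Z ∈ I.tset j W := by
  refine ⟨hZW, I.decomp_subset hZ.2 ?_⟩
  exact fun x hx => ⟨hW.1 hx.1, hx.2⟩

/-- If `W` is a blanket of `S` and `U` a blanket of `W`, then `U` is a blanket of `S`. -/
lemma tset_up {j : V} {S W U : Set V} (hW : W ∈ I.tset j S) (hU : U ∈ I.tset j W) :
    U ∈ I.tset j S := by
  obtain ⟨hWS, hWi⟩ := hW
  obtain ⟨hUW, hUi⟩ := hU
  refine ⟨hUW.trans hWS, ?_⟩
  have h1 : I.ind {j} (S \ W) ((W \ U) ∪ U) := by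
    have : (W \ U) ∪ U = W := by
      ext x; simp only [Set.mem_union, Set.mem_diff]
      constructor
      · rintro (⟨h, _⟩ | h); exact h; exact hUW h
      · intro h; by_cases hx : x ∈ U <;> tauto
    rw [this]; exact hWi
  have h2 := I.contr {j} (W \ U) (S \ W) U hUi h1
  have : (W \ U) ∪ (S \ W) = S \ U := by
    ext x; simp only [Set.mem_union, Set.mem_diff]
    constructor
    · rintro (⟨h, hn⟩ | ⟨h, hn⟩)
      · exact ⟨hWS h, hn⟩
      · exact ⟨h, fun hx => hn (hUW hx)⟩
    · rintro ⟨h, hn⟩; by_cases hx : x ∈ W <;> tauto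
  rwa [this] at h2

/-- Blankets are closed under pairwise intersection. -/
lemma tset_inter {j : V} {S U W : Set V} (hU : U ∈ I.tset j S) (hW : W ∈ I.tset j S) :
    U ∩ W ∈ I.tset j S := by
  obtain ⟨hUS, hUi⟩ := hU
  obtain ⟨hWS, hWi⟩ := hW
  refine ⟨fun x hx => hUS hx.1, ?_⟩
  set X := U \ W with hX
  set Y := W \ U with hY
  set M := U ∩ W with hM
  set R := S \ (U ∪ W) with hR
  have eU : S \ U = Y ∪ R := by
    ext x; simp only [hY, hR, Set.mem_union, Set.mem_diff]
    constructor
    · rintro ⟨h, hn⟩; by_cases hx : x ∈ W <;> tauto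
    · rintro (⟨h, hn⟩ | ⟨h, hn⟩); exacts [⟨hWS h, hn⟩, ⟨h, fun hx => hn (Or.inl hx)⟩]
  have eW : S \ W = X ∪ R := by
    ext x; simp only [hX, hR, Set.mem_union, Set.mem_diff]
    constructor
    · rintro ⟨h, hn⟩; by_cases hx : x ∈ U <;> tauto
    · rintro (⟨h, hn⟩ | ⟨h, hn⟩); exacts [⟨hUS h, hn⟩, ⟨h, fun hx => hn (Or.inr hx)⟩]
  have eUM : U = X ∪ M := by
    ext x; simp only [hX, hM, Set.mem_union, Set.mem_diff, Set.mem_inter_iff]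
    constructor
    · intro h; by_cases hx : x ∈ W <;> tauto
    · tauto
  have eWM : W = Y ∪ M := by
    ext x; simp only [hY, hM, Set.mem_union, Set.mem_diff, Set.mem_inter_iff]
    constructor
    · intro h; by_cases hx : x ∈ U <;> tauto
    · tauto
  have h1 : I.ind {j} (Y ∪ R) (X ∪ M) := by rw [← eU, ← eUM]; exact hUi
  have h2 : I.ind {j} (X ∪ R) (Y ∪ M) := by rw [← eW, ← eWM]; exact hWi
  have hY1 : I.ind {j} Y (X ∪ M) := (I.decomp _ _ _ _ h1).1
  have hX1 : I.ind {j} X (Y ∪ M) := (I.decomp _ _ _ _ h2).1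
  have hXY : I.ind {j} (X ∪ Y) M := I.inter _ _ _ _ hX1 hY1
  have hR1 : I.ind {j} R ((X ∪ M) ∪ Y) := by
    have := I.weakUnion {j} R Y (X ∪ M) (by rwa [Set.union_comm] at h1)
    exact this
  have hR2 : I.ind {j} R ((X ∪ Y) ∪ M) := by
    have e : (X ∪ M) ∪ Y = (X ∪ Y) ∪ M := by
      ext x; simp only [Set.mem_union]; tauto
    rwa [e] at hR1
  have hfin := I.contr {j} (X ∪ Y) R M hXY hR2
  have e2 : (X ∪ Y) ∪ R = S \ M := by
    ext x; simp only [hX, hY, hR, hM, Set.mem_union, Set.mem_diff, Set.mem_inter_iff]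
    constructor
    · rintro ((⟨h, hn⟩ | ⟨h, hn⟩) | ⟨h, hn⟩)
      · exact ⟨hUS h, fun hc => hn hc.2⟩
      · exact ⟨hWS h, fun hc => hn hc.1⟩
      · exact ⟨h, fun hc => hn (Or.inl hc.1)⟩
    · rintro ⟨h, hn⟩
      by_cases hx : x ∈ U
      · exact Or.inl (Or.inl ⟨hx, fun hw => hn ⟨hx, hw⟩⟩)
      · by_cases hw : x ∈ W
        · exact Or.inl (Or.inr ⟨hw, hx⟩)
        · exact Or.inr ⟨h, by tauto⟩
  rwa [e2] at hfin

/-- A blanket of `S` has the same Markov boundary as `S`. -/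
lemma mb_eq_of_mem_tset {j : V} {S W : Set V} (hW : W ∈ I.tset j S) :
    I.mb j W = I.mb j S := by
  apply Set.Subset.antisymm
  · intro x hx U hU
    have hUW : U ∩ W ∈ I.tset j W :=
      I.tset_down hW (I.tset_inter hU hW) (fun y hy => hy.2)
    exact (hx _ hUW).1
  · intro x hx U hU
    exact hx _ (I.tset_up hW hU)

end Graphoid

/-- A compositional graphoid: a graphoid additionally satisfying composition. -/
structure CompGraphoid (V : Type*) extends Graphoid V where
  comp : ∀ A B D C, ind A B C → ind A D C → ind A (B ∪ D) C

def CompGraphoid.mb {V : Type*} (I : CompGraphoid V) (j : V) (S : Set V) : Set V :=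
  I.toGraphoid.mb j S

/-- The neighbourhood lattice of `j` relative to `S`. -/
def CompGraphoid.nlat {V : Type*} (I : CompGraphoid V) (j : V) (S : Set V) : Set (Set V) :=
  {U | U ⊆ {j}ᶜ ∧ I.mb j U = I.mb j S}

/-- The infimum of the neighbourhood lattice equals the relative Markov boundary. -/
theorem nlat_sInter_eq_mb {V : Type*} (I : CompGraphoid V) (j : V) (S : Set V)
    (hS : S ⊆ {j}ᶜ) :
    ⋂₀ I.nlat j S = I.mb j S := by

  apply Set.Subset.antisymm
  · intro x hx W hW
    have hWn : W ∈ I.nlat j S := by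
      refine ⟨fun y hy => hS (hW.1 hy), ?_⟩
      simpa [CompGraphoid.mb] using I.toGraphoid.mb_eq_of_mem_tset hW
    exact hx _ hWn
  · intro x hx U hU
    have h1 : I.mb j S ⊆ U := by
      rw [← hU.2]; exact I.toGraphoid.mb_subset j U
    exact h1 hx
end

section
/- Let H be a Hilbert space, A ∈ B(H) a bounded operator, and P an orthogonal projection on H. Then the set Q(A,P) = {Q : Q is an orthogonal projection on H with QA = PA} is a complete convex sublattice of the projection lattice of H: it is closed under arbitrary meets and joins of its elements, and if Q1 ≤ R ≤ Q2 with Q1, Q2 ∈ Q(A,P) and R an orthogonal projection, then R ∈ Q(A,P). -/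
open ContinuousLinearMap

section Aux

variable {H : Type*} [NormedAddCommGroup H] [InnerProductSpace ℂ H] [CompleteSpace H]

private lemma sa_mul_comm {Q R S : H →L[ℂ] H} (hQ : IsSelfAdjoint Q) (hR : IsSelfAdjoint R)
    (hS : IsSelfAdjoint S) (h : Q * R = S) : R * Q = S := by
  have := congrArg star h
  rwa [star_mul, hQ.star_eq, hR.star_eq, hS.star_eq] at this

private noncomputable def projCLM (K : Submodule ℂ H) [CompleteSpace K] : H →L[ℂ] H :=
  K.subtypeL ∘L K.orthogonalProjectionOnto

private lemma projCLM_mem (K : Submodule ℂ H) [CompleteSpace K] (x : H) : projCLM K x ∈ K :=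
  (K.orthogonalProjectionOnto x).2

private lemma projCLM_eq_self (K : Submodule ℂ H) [CompleteSpace K] {x : H} (hx : x ∈ K) :
    projCLM K x = x := K.starProjection_eq_self_iff.mpr hx

private lemma projCLM_eq_zero (K : Submodule ℂ H) [CompleteSpace K] {x : H} (hx : x ∈ Kᗮ) :
    projCLM K x = 0 := by
  have := Submodule.orthogonalProjectionOnto_apply_of_mem_orthogonal (K := K) hx
  simp [projCLM, this]

private lemma projCLM_isOrthProj (K : Submodule ℂ H) [CompleteSpace K] :
    IsSelfAdjoint (projCLM K) ∧ IsIdempotentElem (projCLM K) := by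
  refine ⟨isSelfAdjoint_starProjection K, ?_⟩
  ext x
  exact projCLM_eq_self K (projCLM_mem K x)

end Aux

/-- An orthogonal projection: a self-adjoint idempotent bounded operator. -/
def IsOrthProj {H : Type*} [NormedAddCommGroup H] [InnerProductSpace ℂ H]
    [CompleteSpace H] (P : H →L[ℂ] H) : Prop :=
  IsSelfAdjoint P ∧ IsIdempotentElem P

/-- The order on the projection lattice: `P ≤ Q` iff `P * Q = P`. -/
def ProjLE {H : Type*} [NormedAddCommGroup H] [InnerProductSpace ℂ H]
    [CompleteSpace H] (P Q : H →L[ℂ] H) : Prop :=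
  P * Q = P

/-- `Q(A,P) = {Q orth. projection : Q A = P A}` is a complete convex sublattice of the
projection lattice: closed under arbitrary meets and joins, and convex. -/
theorem QAP_complete_convex_sublattice {H : Type*} [NormedAddCommGroup H]
    [InnerProductSpace ℂ H] [CompleteSpace H]
    (A P : H →L[ℂ] H) (hP : IsOrthProj P) :
    (∀ 𝒮 : Set (H →L[ℂ] H),
      𝒮 ⊆ {Q | IsOrthProj Q ∧ Q * A = P * A} → 𝒮.Nonempty →
      (∃ Qinf ∈ {Q | IsOrthProj Q ∧ Q * A = P * A},
        (∀ Q ∈ 𝒮, ProjLE Qinf Q) ∧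
        ∀ R : H →L[ℂ] H, IsOrthProj R → (∀ Q ∈ 𝒮, ProjLE R Q) → ProjLE R Qinf) ∧
      (∃ Qsup ∈ {Q | IsOrthProj Q ∧ Q * A = P * A},
        (∀ Q ∈ 𝒮, ProjLE Q Qsup) ∧
        ∀ R : H →L[ℂ] H, IsOrthProj R → (∀ Q ∈ 𝒮, ProjLE Q R) → ProjLE Qsup R)) ∧
    (∀ Q₁ Q₂ R : H →L[ℂ] H,
      (IsOrthProj Q₁ ∧ Q₁ * A = P * A) → (IsOrthProj Q₂ ∧ Q₂ * A = P * A) →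
      IsOrthProj R → ProjLE Q₁ R → ProjLE R Q₂ →
      IsOrthProj R ∧ R * A = P * A) := by
  constructor
  · rintro 𝒮 h𝒮 ⟨Q₀, hQ₀mem⟩
    obtain ⟨⟨hQ₀sa, hQ₀id⟩, hQ₀A⟩ := h𝒮 hQ₀mem
    -- fixed-point submodule of an operator
    set F : (H →L[ℂ] H) → Submodule ℂ H := fun Q => LinearMap.ker ((Q - 1 : H →L[ℂ] H) : H →ₗ[ℂ] H) with hF
    have hFmem : ∀ (Q : H →L[ℂ] H) (x : H), x ∈ F Q ↔ Q x = x := by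
      intro Q x
      simp [hF, LinearMap.mem_ker, sub_eq_zero]
    have hFclosed : ∀ Q : H →L[ℂ] H, IsClosed (F Q : Set H) := fun Q =>
      ContinuousLinearMap.isClosed_ker _
    -- members fix P A x and kill A x - P A x
    have hfix : ∀ Q ∈ 𝒮, ∀ x, Q (P (A x)) = P (A x) := by
      intro Q hQ x
      obtain ⟨⟨hQsa, hQid⟩, hQA⟩ := h𝒮 hQ
      have h1 : Q (A x) = P (A x) := congrFun (congrArg DFunLike.coe hQA) x
      have h2 : Q (Q (A x)) = Q (A x) := by
        have := congrFun (congrArg DFunLike.coe hQid) (A x)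
        simpa [ContinuousLinearMap.mul_apply] using this
      rw [← h1, h2, h1]
    have hkill : ∀ Q ∈ 𝒮, ∀ x, Q (A x - P (A x)) = 0 := by
      intro Q hQ x
      obtain ⟨⟨hQsa, hQid⟩, hQA⟩ := h𝒮 hQ
      have h1 : Q (A x) = P (A x) := congrFun (congrArg DFunLike.coe hQA) x
      rw [map_sub, h1, hfix Q hQ x, sub_self]
    constructor
    · -- infimum
      set K : Submodule ℂ H := ⨅ Q : 𝒮, F Q.1 with hK
      have hKclosed : IsClosed (K : Set H) := by
        rw [hK, Submodule.coe_iInf]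
        exact isClosed_iInter fun Q => hFclosed Q.1
      haveI : CompleteSpace K := hKclosed.completeSpace_coe
      have hKle : ∀ Q ∈ 𝒮, K ≤ F Q := fun Q hQ => iInf_le (fun Q : 𝒮 => F Q.1) ⟨Q, hQ⟩
      have hKmem : ∀ {y : H}, (∀ Q ∈ 𝒮, Q y = y) → y ∈ K := by
        intro y hy
        rw [hK, Submodule.mem_iInf]
        exact fun Q => (hFmem Q.1 y).mpr (hy Q.1 Q.2)
      refine ⟨projCLM K, ⟨projCLM_isOrthProj K, ?_⟩, ?_, ?_⟩
      · -- projCLM K * A = P * A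
        ext x
        have h1 : P (A x) ∈ K := hKmem fun Q hQ => hfix Q hQ x
        have h2 : A x - P (A x) ∈ Kᗮ := by
          rw [Submodule.mem_orthogonal]
          intro u hu
          have huf : Q₀ u = u := (hFmem Q₀ u).mp (hKle Q₀ hQ₀mem hu)
          calc (inner ℂ u (A x - P (A x)) : ℂ)
              = inner ℂ (Q₀ u) (A x - P (A x)) := by rw [huf]
            _ = inner ℂ u (Q₀ (A x - P (A x))) :=
                (ContinuousLinearMap.isSelfAdjoint_iff_isSymmetric.mp hQ₀sa) u _
            _ = 0 := by rw [hkill Q₀ hQ₀mem x, inner_zero_right]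
        have : projCLM K (A x) = projCLM K (P (A x)) + projCLM K (A x - P (A x)) := by
          rw [← map_add]; congr 1; abel
        rw [ContinuousLinearMap.mul_apply, ContinuousLinearMap.mul_apply, this,
          projCLM_eq_self K h1, projCLM_eq_zero K h2, add_zero]
      · -- lower bound
        intro Q hQ
        obtain ⟨⟨hQsa, hQid⟩, hQA⟩ := h𝒮 hQ
        have h1 : Q * projCLM K = projCLM K := by
          ext x
          exact (hFmem Q _).mp (hKle Q hQ (projCLM_mem K x))
        exact sa_mul_comm hQsa (projCLM_isOrthProj K).1 (projCLM_isOrthProj K).1 h1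
      · -- greatest lower bound
        intro R ⟨hRsa, hRid⟩ hR
        have h1 : projCLM K * R = R := by
          ext x
          refine projCLM_eq_self K (hKmem fun Q hQ => ?_)
          obtain ⟨⟨hQsa, hQid⟩, hQA⟩ := h𝒮 hQ
          have : Q * R = R := sa_mul_comm hRsa hQsa hRsa (hR Q hQ)
          exact congrFun (congrArg DFunLike.coe this) x
        exact sa_mul_comm (projCLM_isOrthProj K).1 hRsa hRsa h1
    · -- supremum
      set W : Submodule ℂ H := ⨆ Q : 𝒮, F Q.1 with hW
      set M : Submodule ℂ H := W.topologicalClosure with hM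
      haveI : CompleteSpace M := W.isClosed_topologicalClosure.completeSpace_coe
      have hWle : ∀ Q ∈ 𝒮, F Q ≤ M := fun Q hQ =>
        le_trans (le_iSup (fun Q : 𝒮 => F Q.1) ⟨Q, hQ⟩) W.le_topologicalClosure
      refine ⟨projCLM M, ⟨projCLM_isOrthProj M, ?_⟩, ?_, ?_⟩
      · -- projCLM M * A = P * A
        ext x
        have h1 : P (A x) ∈ M := hWle Q₀ hQ₀mem ((hFmem Q₀ _).mpr (hfix Q₀ hQ₀mem x))
        have h2 : A x - P (A x) ∈ Mᗮ := by
          rw [Submodule.mem_orthogonal]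
          intro u hu
          set v := A x - P (A x) with hv
          have hMker : M ≤ LinearMap.ker ((innerSL ℂ v : H →L[ℂ] ℂ) : H →ₗ[ℂ] ℂ) := by
            refine W.topologicalClosure_minimal ?_
              (ContinuousLinearMap.isClosed_ker _)
            refine iSup_le ?_
            rintro ⟨Q, hQ⟩ u hu
            obtain ⟨⟨hQsa, hQid⟩, hQA⟩ := h𝒮 hQ
            have huf : Q u = u := (hFmem Q u).mp hu
            have huv : (inner ℂ u v : ℂ) = 0 := by
              calc (inner ℂ u v : ℂ) = inner ℂ (Q u) v := by rw [huf]
                _ = inner ℂ u (Q v) :=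
                    (ContinuousLinearMap.isSelfAdjoint_iff_isSymmetric.mp hQsa) u v
                _ = 0 := by rw [hv, hkill Q hQ x, inner_zero_right]
            simpa [LinearMap.mem_ker, innerSL_apply_apply, inner_eq_zero_symm] using huv
          have := hMker hu
          rw [LinearMap.mem_ker] at this
          simp only [ContinuousLinearMap.coe_coe, innerSL_apply_apply] at this
          rwa [inner_eq_zero_symm] at this
        have : projCLM M (A x) = projCLM M (P (A x)) + projCLM M (A x - P (A x)) := by
          rw [← map_add]; congr 1; abel
        rw [ContinuousLinearMap.mul_apply, ContinuousLinearMap.mul_apply, this,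
          projCLM_eq_self M h1, projCLM_eq_zero M h2, add_zero]
      · -- upper bound
        intro Q hQ
        obtain ⟨⟨hQsa, hQid⟩, hQA⟩ := h𝒮 hQ
        have h1 : projCLM M * Q = Q := by
          ext x
          refine projCLM_eq_self M (hWle Q hQ ((hFmem Q _).mpr ?_))
          exact congrFun (congrArg DFunLike.coe hQid) x
        exact sa_mul_comm (projCLM_isOrthProj M).1 hQsa hQsa h1
      · -- least upper bound
        intro R ⟨hRsa, hRid⟩ hR
        have hMF : M ≤ F R := by
          refine W.topologicalClosure_minimal ?_ (hFclosed R)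
          refine iSup_le ?_
          rintro ⟨Q, hQ⟩ y hy
          obtain ⟨⟨hQsa, hQid⟩, hQA⟩ := h𝒮 hQ
          have hRQ : R * Q = Q := sa_mul_comm hQsa hRsa hQsa (hR Q hQ)
          have hyQ : Q y = y := (hFmem Q y).mp hy
          refine (hFmem R y).mpr ?_
          calc R y = R (Q y) := by rw [hyQ]
            _ = Q y := congrFun (congrArg DFunLike.coe hRQ) y
            _ = y := hyQ
        have h1 : R * projCLM M = projCLM M := by
          ext x
          exact (hFmem R _).mp (hMF (projCLM_mem M x))
        exact sa_mul_comm hRsa (projCLM_isOrthProj M).1 (projCLM_isOrthProj M).1 h1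
  · -- convexity
    rintro Q₁ Q₂ R ⟨⟨hQ₁sa, hQ₁id⟩, hQ₁A⟩ ⟨⟨hQ₂sa, hQ₂id⟩, hQ₂A⟩ ⟨hRsa, hRid⟩ hQ₁R hRQ₂
    refine ⟨⟨hRsa, hRid⟩, ?_⟩
    have hRQ₁ : R * Q₁ = Q₁ := sa_mul_comm hQ₁sa hRsa hQ₁sa hQ₁R
    calc R * A = (R * Q₂) * A := by rw [hRQ₂]
      _ = R * (Q₂ * A) := mul_assoc _ _ _
      _ = R * (Q₁ * A) := by rw [hQ₂A, ← hQ₁A]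
      _ = (R * Q₁) * A := (mul_assoc _ _ _).symm
      _ = Q₁ * A := by rw [hRQ₁]
      _ = P * A := hQ₁A
end

section
/- Let G be an undirected graph on vertex set V, and let the separation graphoid be defined by: A ⫫ B | C iff every path in G from a vertex of A to a vertex of B passes through C. Fix j ∈ V and suppose removing j from G leaves connected components with vertex sets G_1, …, G_K. Then for any S ⊆ V \ {j}, the relative Markov boundary satisfies m(j;S) = ⋃_k m(j; S ∩ G_k), and this union is disjoint. -/
/-- `C` separates `A` from `B` in `G`: every walk in `G` from a vertex of `A`
to a vertex of `B` passes through a vertex of `C`. -/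
def Separates {V : Type*} (G : SimpleGraph V) (A B C : Set V) : Prop :=
  ∀ a ∈ A, ∀ b ∈ B, ∀ p : G.Walk a b, ∃ c ∈ C, c ∈ p.support

/-- The relative Markov boundary of `j` within `S` for the separation graphoid of `G`:
the smallest `U ⊆ S` such that `U` separates `j` from `S \ U`. -/
def mbSep {V : Type*} (G : SimpleGraph V) (j : V) (S : Set V) : Set V :=
  ⋂₀ {U : Set V | U ⊆ S ∧ Separates G {j} (S \ U) U}

/-- `u` and `v` are connected in `G` by a walk avoiding `j`. -/
def ReachAvoid {V : Type*} (G : SimpleGraph V) (j : V) (u v : V) : Prop :=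
  ∃ p : G.Walk u v, j ∉ p.support

/-- The explicit Markov boundary: vertices of `S` reachable from `j` by a walk
touching `S` only at its endpoint. -/
def Mset {V : Type*} (G : SimpleGraph V) (j : V) (S : Set V) : Set V :=
  {s | s ∈ S ∧ ∃ p : G.Walk j s, ∀ v ∈ p.support, v ∈ S → v = s}

lemma self_mem_sepFamily {V : Type*} (G : SimpleGraph V) (j : V) (S : Set V) :
    S ∈ {U : Set V | U ⊆ S ∧ Separates G {j} (S \ U) U} := by
  refine ⟨subset_rfl, ?_⟩
  intro a _ b hb p
  rw [Set.diff_self] at hb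
  exact hb.elim

lemma mbSep_subset {V : Type*} (G : SimpleGraph V) (j : V) (S : Set V) :
    mbSep G j S ⊆ S :=
  Set.sInter_subset_of_mem (self_mem_sepFamily G j S)

/-- Scanning along a walk: if the walk so far from `j` has avoided `S`, and the
walk ends in `S`, then some vertex of the walk is in the explicit boundary. -/
lemma scan {V : Type*} (G : SimpleGraph V) (j : V) (S : Set V) {a b : V}
    (p : G.Walk a b) (q : G.Walk j a)
    (hq : ∀ v ∈ q.support, v ∈ S → v = a) (hb : b ∈ S) :
    ∃ c ∈ p.support, c ∈ Mset G j S := by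
  induction p with
  | nil =>
      exact ⟨_, SimpleGraph.Walk.start_mem_support _, hb, q, hq⟩
  | @cons u v w h p ih =>
      by_cases hu : u ∈ S
      · exact ⟨u, SimpleGraph.Walk.start_mem_support _, hu, q, hq⟩
      · have hqS : ∀ x ∈ q.support, x ∉ S := by
          intro x hx hxS
          exact hu ((hq x hx hxS) ▸ hxS)
        obtain ⟨c, hc, hcM⟩ := ih (q.concat h) (by
          intro x hx hxS
          rw [SimpleGraph.Walk.support_concat] at hx
          rcases List.mem_append.mp hx with hx | hx
          · exact absurd hxS (hqS x hx)
          · simpa using hx) hb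
        exact ⟨c, by simp [SimpleGraph.Walk.support_cons, hc], hcM⟩

lemma mbSep_eq_Mset {V : Type*} (G : SimpleGraph V) (j : V) (S : Set V)
    (hjS : j ∉ S) : mbSep G j S = Mset G j S := by
  apply Set.Subset.antisymm
  · apply Set.sInter_subset_of_mem
    refine ⟨fun s hs => hs.1, ?_⟩
    rintro a ha b hb p
    rcases ha with rfl
    obtain ⟨c, hc, hcM⟩ := scan G a S p SimpleGraph.Walk.nil
      (by intro v hv _; simpa using hv) hb.1
    exact ⟨c, hcM, hc⟩
  · rintro s ⟨hsS, q, hq⟩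
    rw [mbSep, Set.mem_sInter]
    rintro U ⟨hUS, hUsep⟩
    by_contra hsU
    obtain ⟨c, hcU, hcq⟩ := hUsep j rfl s ⟨hsS, hsU⟩ q
    exact hsU ((hq c hcq (hUS hcU)) ▸ hcU)

/-- If removing `j` from `G` leaves connected components `Gs k`, then
`m(j;S) = ⋃ₖ m(j; S ∩ Gs k)`, and this union is disjoint. -/
theorem mbSep_eq_iUnion_components {V K : Type*} (G : SimpleGraph V) (j : V)
    (Gs : K → Set V)
    (hcover : (⋃ k, Gs k) = ({j}ᶜ : Set V))
    (hdisj : Pairwise (Function.onFun Disjoint Gs))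
    (hconn : ∀ k, ∀ u ∈ Gs k, ∀ v ∈ Gs k, ReachAvoid G j u v)
    (hsep : ∀ k l, k ≠ l → ∀ u ∈ Gs k, ∀ v ∈ Gs l, ¬ ReachAvoid G j u v)
    (S : Set V) (hS : S ⊆ ({j}ᶜ : Set V)) :
    (mbSep G j S = ⋃ k, mbSep G j (S ∩ Gs k)) ∧
    Pairwise (Function.onFun Disjoint (fun k => mbSep G j (S ∩ Gs k))) := by
  classical
  have hjS : j ∉ S := fun h => (hS h) rfl
  have hjSk : ∀ k, j ∉ S ∩ Gs k := fun k h => hjS h.1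
  constructor
  · rw [mbSep_eq_Mset G j S hjS]
    have : (⋃ k, mbSep G j (S ∩ Gs k)) = ⋃ k, Mset G j (S ∩ Gs k) := by
      refine Set.iUnion_congr fun k => mbSep_eq_Mset G j (S ∩ Gs k) (hjSk k)
    rw [this]
    apply Set.Subset.antisymm
    · rintro s ⟨hsS, q, hq⟩
      have hsne : s ∈ ({j}ᶜ : Set V) := hS hsS
      have : s ∈ ⋃ k, Gs k := hcover ▸ hsne
      obtain ⟨k, hk⟩ := Set.mem_iUnion.mp this
      refine Set.mem_iUnion.mpr ⟨k, ⟨hsS, hk⟩, q, fun v hv hvS => hq v hv hvS.1⟩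
    · rintro s hs
      obtain ⟨k, ⟨hsS, hsk⟩, q, hq⟩ := Set.mem_iUnion.mp hs
      -- take the suffix of q after the last occurrence of j
      have hjr : j ∈ q.reverse.support := SimpleGraph.Walk.end_mem_support _
      set t := q.reverse.takeUntil j hjr with ht
      have hcount : t.support.count j = 1 :=
        SimpleGraph.Walk.count_support_takeUntil_eq_one q.reverse hjr
      set r := t.reverse with hr
      have hrsupp : r.support = t.support.reverse := SimpleGraph.Walk.support_reverse t
      have hrcount : r.support.count j = 1 := by
        rw [hrsupp, List.count_reverse]; exact hcount
      have hrq : ∀ v ∈ r.support, v ∈ q.support := by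
        intro v hv
        rw [hrsupp, List.mem_reverse] at hv
        have := SimpleGraph.Walk.support_takeUntil_subset q.reverse hjr hv
        rwa [SimpleGraph.Walk.support_reverse, List.mem_reverse] at this
      refine ⟨hsS, r, ?_⟩
      intro v hv hvS
      have hvj : v ≠ j := fun h => hjS (h ▸ hvS)
      have hvc : v ∈ ⋃ l, Gs l := hcover ▸ (hvj : v ∈ ({j}ᶜ : Set V))
      obtain ⟨l, hvl⟩ := Set.mem_iUnion.mp hvc
      -- the walk from v to s within r avoids j
      have hreach : ReachAvoid G j v s := by
        refine ⟨r.dropUntil v hv, fun hj' => ?_⟩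
        have hsplit : r.support
            = (r.takeUntil v hv).support ++ (r.dropUntil v hv).support.tail := by
          conv_lhs => rw [← SimpleGraph.Walk.take_spec r hv]
          rw [SimpleGraph.Walk.support_append]
        have h1 : j ∈ (r.takeUntil v hv).support :=
          SimpleGraph.Walk.start_mem_support _
        have h2 : j ∈ (r.dropUntil v hv).support.tail := by
          have := (SimpleGraph.Walk.support_eq_cons (r.dropUntil v hv)) ▸ hj'
          rcases List.mem_cons.mp this with h | h
          · exact absurd h.symm hvj
          · exact h
        have : 2 ≤ r.support.count j := by
          rw [hsplit, List.count_append]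
          have c1 : 1 ≤ (r.takeUntil v hv).support.count j :=
            List.count_pos_iff.mpr h1
          have c2 : 1 ≤ ((r.dropUntil v hv).support.tail).count j :=
            List.count_pos_iff.mpr h2
          omega
        omega
      have hlk : l = k := by
        by_contra hne
        exact hsep l k hne v hvl s hsk hreach
      have : v ∈ S ∩ Gs k := ⟨hvS, hlk ▸ hvl⟩
      exact hq v (hrq v hv) this
  · intro k l hkl
    have h1 : mbSep G j (S ∩ Gs k) ⊆ Gs k :=
      fun x hx => (mbSep_subset G j (S ∩ Gs k) hx).2
    have h2 : mbSep G j (S ∩ Gs l) ⊆ Gs l :=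
      fun x hx => (mbSep_subset G j (S ∩ Gs l) hx).2
    exact Set.disjoint_of_subset h1 h2 (hdisj hkl)
end
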